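/- For a Schwartz function Φ on ℝ², the identity ∬_{ℝ²} Φ(x,y) dx dy = ∫_ℝ O_ξ(Φ) dξ holds, where O_ξ(Φ) = ∫_{ℝ^×} Φ(t, ξ/t) |t|^{-1} dt is the orbital integral over the hyperbola xy = ξ. -/

import Mathlib

open MeasureTheory

/-- Integration formula: the integral of a Schwartz function on `ℝ²` equals the
integral over `ξ` of its orbital integrals over the hyperbolas `xy = ξ`. -/
theorem stmt_4 (Φ : SchwartzMap (ℝ × ℝ) ℂ) :
    (∫ x : ℝ, ∫ y : ℝ, Φ (x, y))
      = ∫ ξ : ℝ, ∫ t : ℝ, (|t|⁻¹ : ℝ) • Φ (t, ξ / t) := by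
  have hΦ : Integrable (fun p : ℝ × ℝ => Φ p) (volume.prod volume) := by
    rw [← MeasureTheory.Measure.volume_eq_prod]; exact Φ.integrable
  set F : ℝ × ℝ → ℂ := fun p => (|p.1|⁻¹ : ℝ) • Φ (p.1, p.2 / p.1) with hF
  have hmeas : AEStronglyMeasurable F (volume.prod volume) := by
    apply Measurable.aestronglyMeasurable
    refine Measurable.smul (f := fun p : ℝ × ℝ => (|p.1|⁻¹ : ℝ)) (g := fun p : ℝ × ℝ => Φ (p.1, p.2 / p.1)) ?_ ?_
    · measurability
    · exact Φ.continuous.measurable.comp (by measurability)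
  have hne : ∀ᵐ t : ℝ, t ≠ 0 := by
    filter_upwards [compl_mem_ae_iff.mpr (measure_singleton (0:ℝ))] with t ht
    simpa using ht
  -- a.e. slice integrability and norm computation
  have hslice : ∀ᵐ t : ℝ, Integrable (fun y => Φ (t, y)) := hΦ.prod_right_ae
  have hFslice : ∀ᵐ t : ℝ, Integrable (fun ξ => F (t, ξ)) := by
    filter_upwards [hslice, hne] with t ht htne
    exact (ht.comp_div htne).smul ((|t|⁻¹ : ℝ))
  have hnormint : Integrable (fun t => ∫ ξ, ‖F (t, ξ)‖) := by
    have h1 : Integrable (fun t => ∫ y, ‖Φ (t, y)‖) := hΦ.integral_norm_prod_left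
    apply h1.congr
    filter_upwards [hne] with t htne
    have := MeasureTheory.Measure.integral_comp_div (fun y => ‖Φ (t, y)‖) t
    rw [show (fun ξ => ‖F (t, ξ)‖) = fun ξ => |t|⁻¹ * ‖Φ (t, ξ / t)‖ by
      funext ξ; simp [hF, norm_smul, abs_of_nonneg (abs_nonneg t)]]
    rw [integral_const_mul, this, smul_eq_mul, ← mul_assoc,
      inv_mul_cancel₀ (by positivity : |t| ≠ 0), one_mul]
  have hFint : Integrable F (volume.prod volume) :=
    (integrable_prod_iff hmeas).mpr ⟨hFslice, hnormint⟩
  -- pointwise: ∫ y, Φ (t, y) = ∫ ξ, F (t, ξ) for t ≠ 0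
  have hpt : ∀ᵐ t : ℝ, (∫ y, Φ (t, y)) = ∫ ξ, F (t, ξ) := by
    filter_upwards [hne] with t htne
    have := MeasureTheory.Measure.integral_comp_div (fun y => Φ (t, y)) t
    rw [show (fun ξ => F (t, ξ)) = fun ξ => (|t|⁻¹ : ℝ) • Φ (t, ξ / t) from rfl,
      integral_smul, this, smul_smul, inv_mul_cancel₀ (by positivity : |t| ≠ 0), one_smul]
  calc (∫ x : ℝ, ∫ y : ℝ, Φ (x, y)) = ∫ t, ∫ ξ, F (t, ξ) := integral_congr_ae hpt
    _ = ∫ ξ, ∫ t, F (t, ξ) := integral_integral_swap hFint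
    _ = ∫ ξ : ℝ, ∫ t : ℝ, (|t|⁻¹ : ℝ) • Φ (t, ξ / t) := rfl
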